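/- Let λ be a scoring rule that extends to a differentiable map on an open neighborhood of Δ° in ℝ^{M+1}. Then for every η ∈ Δ°: λ^{Ψ^λ}(η) = λ(η) − ⟨η, g^λ(η)⟩·𝟙 + g^λ(η), where 𝟙 = (1, 1, …, 1) ∈ ℝ^{M+1}. In particular, if λ is proper (so that g^λ ≡ 0 on Δ°), then λ^{Ψ^λ}(η) = λ(η) for all η ∈ Δ°. -/

import Mathlib

open scoped BigOperators

/-- The interior of the standard probability simplex in `ℝ^{M+1}`. -/
def posSimplex (M : ℕ) : Set (Fin (M + 1) → ℝ) :=
  {η | (∀ i, 0 < η i) ∧ ∑ i, η i = 1}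

/-- `ρ(η) = (η_1/η_0, …, η_M/η_0)`. -/
noncomputable def rhoOf (M : ℕ) (η : Fin (M + 1) → ℝ) : Fin M → ℝ :=
  fun z => η z.succ / η 0

/-- `η(ρ) = (1, ρ_1, …, ρ_M)/(1 + ρ_1 + ⋯ + ρ_M)`. -/
noncomputable def etaOfRho (M : ℕ) (ρ : Fin M → ℝ) : Fin (M + 1) → ℝ :=
  fun i => Fin.cons (α := fun _ => ℝ) (1 : ℝ) ρ i / (1 + ∑ j, ρ j)

/-- The generating function `Ψ^λ(ρ) = −⟨(1, ρ), λ(η(ρ))⟩` of a scoring rule `λ`. -/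
noncomputable def genFun (M : ℕ)
    (lam : (Fin (M + 1) → ℝ) → (Fin (M + 1) → ℝ)) (ρ : Fin M → ℝ) : ℝ :=
  -∑ i, Fin.cons (α := fun _ => ℝ) (1 : ℝ) ρ i * lam (etaOfRho M ρ) i

/-- The `Ψ`-induced scoring rule: `λ^Ψ_0(η) = ⟨ρ, ∇Ψ(ρ)⟩ − Ψ(ρ)` and
`λ^Ψ_z(η) = −(∇Ψ(ρ))_z` for `z = 1, …, M`, where `ρ = ρ(η)`. -/
noncomputable def inducedRule (M : ℕ) (Ψ : (Fin M → ℝ) → ℝ)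
    (η : Fin (M + 1) → ℝ) : Fin (M + 1) → ℝ :=
  Fin.cons
    ((∑ z, rhoOf M η z * fderiv ℝ Ψ (rhoOf M η) (Pi.single z 1)) - Ψ (rhoOf M η))
    (fun z => - fderiv ℝ Ψ (rhoOf M η) (Pi.single z 1))

/-- `g^λ(η)`: the gradient at `η̂ = η` of the conditional-risk map `η̂ ↦ ⟨η, λ(η̂)⟩`. -/
noncomputable def gscore (M : ℕ)
    (lam : (Fin (M + 1) → ℝ) → (Fin (M + 1) → ℝ)) (η : Fin (M + 1) → ℝ) :
    Fin (M + 1) → ℝ :=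
  fun i => fderiv ℝ (fun η' => ∑ j, η j * lam η' j) η (Pi.single i 1)

section Aux

variable {M : ℕ} {lam : (Fin (M + 1) → ℝ) → (Fin (M + 1) → ℝ)}
  {η : Fin (M + 1) → ℝ}

lemma aux_sum_succ (hη : η ∈ posSimplex M) :
    ∑ z : Fin M, η z.succ = 1 - η 0 := by
  have := hη.2
  rw [Fin.sum_univ_succ] at this
  linarith

lemma aux_one_add_sum_rhoOf (hη : η ∈ posSimplex M) :
    1 + ∑ z, rhoOf M η z = (η 0)⁻¹ := by
  have h0 : η 0 ≠ 0 := ne_of_gt (hη.1 0)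
  have : ∑ z, rhoOf M η z = (1 - η 0) / η 0 := by
    rw [← aux_sum_succ hη]
    simp [rhoOf, Finset.sum_div]
  rw [this]
  field_simp
  ring

lemma aux_cons_rhoOf (hη : η ∈ posSimplex M) (i : Fin (M + 1)) :
    Fin.cons (α := fun _ => ℝ) (1 : ℝ) (rhoOf M η) i = η i / η 0 := by
  have h0 : η 0 ≠ 0 := ne_of_gt (hη.1 0)
  induction i using Fin.cases with
  | zero => simp [Fin.cons_zero, div_self h0]
  | succ y => simp [Fin.cons_succ, rhoOf]

lemma aux_etaOfRho_rhoOf (hη : η ∈ posSimplex M) :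
    etaOfRho M (rhoOf M η) = η := by
  have h0 : η 0 ≠ 0 := ne_of_gt (hη.1 0)
  funext i
  rw [etaOfRho, aux_one_add_sum_rhoOf hη, aux_cons_rhoOf hη]
  field_simp

/-- the "risk" continuous linear map used for `gscore`. -/
noncomputable def riskCLM (M : ℕ) (lam : (Fin (M + 1) → ℝ) → (Fin (M + 1) → ℝ))
    (η : Fin (M + 1) → ℝ) : (Fin (M + 1) → ℝ) →L[ℝ] ℝ :=
  (∑ j, η j • ContinuousLinearMap.proj (R := ℝ) (φ := fun _ : Fin (M+1) => ℝ) j).comp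
    (fderiv ℝ lam η)

lemma aux_hasFDerivAt_risk (hld : DifferentiableAt ℝ lam η) :
    HasFDerivAt (fun η' => ∑ j, η j * lam η' j) (riskCLM M lam η) η := by
  have hfun : (fun η' => ∑ j, η j * lam η' j)
      = (fun w : Fin (M+1) → ℝ => ∑ j, η j * w j) ∘ lam := by
    funext η'; rfl
  have hT : HasFDerivAt (fun w : Fin (M+1) → ℝ => ∑ j, η j * w j)
      (∑ j, η j • ContinuousLinearMap.proj (R := ℝ) (φ := fun _ : Fin (M+1) => ℝ) j) (lam η) := by
    have := (∑ j, η j • ContinuousLinearMap.proj (R := ℝ)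
      (φ := fun _ : Fin (M+1) => ℝ) j).hasFDerivAt (x := lam η)
    convert this using 2 with w
    simp [ContinuousLinearMap.sum_apply]
  rw [hfun]
  exact hT.comp η hld.hasFDerivAt

lemma aux_gscore_eq (hld : DifferentiableAt ℝ lam η) (i : Fin (M + 1)) :
    gscore M lam η i = riskCLM M lam η (Pi.single i 1) := by
  rw [gscore, (aux_hasFDerivAt_risk hld).fderiv]

lemma aux_single_repr : ∑ i : Fin (M+1), η i • (Pi.single i 1 : Fin (M+1) → ℝ) = η := by
  funext j
  simp [Finset.sum_apply, Pi.single_apply]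

lemma aux_sum_gscore (hld : DifferentiableAt ℝ lam η) :
    ∑ i, η i * gscore M lam η i = riskCLM M lam η η := by
  have : ∀ i, η i * gscore M lam η i
      = riskCLM M lam η (η i • (Pi.single i 1 : Fin (M+1) → ℝ)) := by
    intro i
    rw [map_smul, smul_eq_mul, aux_gscore_eq hld i]
  rw [Finset.sum_congr rfl fun i _ => this i, ← map_sum, aux_single_repr]

lemma aux_diff_etaOfRho (hη : η ∈ posSimplex M) :
    DifferentiableAt ℝ (etaOfRho M) (rhoOf M η) := by
  have h0 : η 0 ≠ 0 := ne_of_gt (hη.1 0)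
  have hs0 : (1 + ∑ j, rhoOf M η j) ≠ 0 := by
    rw [aux_one_add_sum_rhoOf hη]; exact inv_ne_zero h0
  rw [show etaOfRho M = fun ρ i =>
      Fin.cons (α := fun _ => ℝ) (1 : ℝ) ρ i / (1 + ∑ j, ρ j) from rfl]
  apply differentiableAt_pi.mpr
  intro i
  simp only [div_eq_mul_inv]
  apply DifferentiableAt.mul
  · induction i using Fin.cases with
    | zero => simpa using differentiableAt_const (1 : ℝ)
    | succ y =>
      simp only [Fin.cons_succ]
      exact (hasFDerivAt_apply y (rhoOf M η)).differentiableAt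
  · exact DifferentiableAt.inv
      ((differentiableAt_const (1 : ℝ)).add
        (DifferentiableAt.fun_sum fun j _ => (hasFDerivAt_apply j (rhoOf M η)).differentiableAt))
      hs0

lemma aux_diff_genFun (hη : η ∈ posSimplex M) (hld : DifferentiableAt ℝ lam η) :
    DifferentiableAt ℝ (genFun M lam) (rhoOf M η) := by
  have hce : DifferentiableAt ℝ (fun ρ => lam (etaOfRho M ρ)) (rhoOf M η) := by
    have := DifferentiableAt.comp (rhoOf M η)
      (by rw [aux_etaOfRho_rhoOf hη]; exact hld) (aux_diff_etaOfRho hη)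
    exact this
  rw [show genFun M lam = fun ρ =>
      -∑ i, Fin.cons (α := fun _ => ℝ) (1 : ℝ) ρ i * lam (etaOfRho M ρ) i from rfl]
  apply DifferentiableAt.neg
  apply DifferentiableAt.fun_sum
  intro i _
  apply DifferentiableAt.mul
  · induction i using Fin.cases with
    | zero => simpa using differentiableAt_const (1 : ℝ)
    | succ y =>
      simp only [Fin.cons_succ]
      exact (hasFDerivAt_apply y (rhoOf M η)).differentiableAt
  · exact differentiableAt_pi.mp hce i

lemma aux_fderiv_genFun (hη : η ∈ posSimplex M) (hld : DifferentiableAt ℝ lam η)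
    (z : Fin M) :
    fderiv ℝ (genFun M lam) (rhoOf M η) (Pi.single z 1)
      = -(lam η z.succ) - gscore M lam η z.succ + ∑ j, η j * gscore M lam η j := by
  classical
  have h0 : η 0 ≠ 0 := ne_of_gt (hη.1 0)
  set ρ₀ := rhoOf M η with hρ₀
  set v : Fin M → ℝ := Pi.single z 1 with hv
  set γ : ℝ → (Fin M → ℝ) := fun t => ρ₀ + t • v with hγdef
  have hγ0 : γ 0 = ρ₀ := by simp [hγdef]
  have hs0 : (1 + ∑ j, ρ₀ j) ≠ 0 := by
    rw [aux_one_add_sum_rhoOf hη]; exact inv_ne_zero h0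
  -- derivative of the line
  have hγ : HasDerivAt γ v 0 := by
    have : HasDerivAt (fun t : ℝ => t • v) ((1:ℝ) • v) 0 :=
      (hasDerivAt_id 0).smul_const v
    simpa [hγdef] using this.const_add ρ₀
  -- numerator coordinates
  have hnum : ∀ i : Fin (M+1),
      HasDerivAt (fun t => Fin.cons (α := fun _ => ℝ) (1:ℝ) (γ t) i)
        (Fin.cons (α := fun _ => ℝ) (0:ℝ) v i) 0 := by
    intro i
    induction i using Fin.cases with
    | zero => simpa using hasDerivAt_const (0:ℝ) (1:ℝ)
    | succ y =>
      simp only [Fin.cons_succ]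
      have : HasDerivAt (fun t : ℝ => ρ₀ y + t * v y) (v y) 0 :=
        (hasDerivAt_mul_const (v y)).const_add (ρ₀ y)
      simpa [hγdef] using this
  -- denominator
  have hden : HasDerivAt (fun t => 1 + ∑ j, γ t j) 1 0 := by
    have h1 : HasDerivAt (fun t : ℝ => 1 + ∑ j, (ρ₀ j + t * v j)) (∑ j, v j) 0 := by
      exact (HasDerivAt.fun_sum fun j _ =>
        (hasDerivAt_mul_const (v j)).const_add (ρ₀ j)).const_add 1
    have h2 : (∑ j, v j) = 1 := by simp [hv, Finset.sum_pi_single']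
    have hfun : (fun t : ℝ => 1 + ∑ j, γ t j)
        = fun t : ℝ => 1 + ∑ j, (ρ₀ j + t * v j) := by
      funext t; simp [hγdef]
    rw [h2] at h1
    rw [hfun]
    exact h1
  -- coordinates of eta ∘ line
  set s₀ : ℝ := 1 + ∑ j, ρ₀ j with hs₀def
  set W : Fin (M+1) → ℝ := fun i =>
    (Fin.cons (α := fun _ => ℝ) (0:ℝ) v i * s₀
        - Fin.cons (α := fun _ => ℝ) (1:ℝ) ρ₀ i * 1) / s₀ ^ 2 with hWdef
  have hE : HasDerivAt (fun t => etaOfRho M (γ t)) W 0 := by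
    apply hasDerivAt_pi.mpr
    intro i
    have := (hnum i).fun_div hden (by simpa [hγ0] using hs0)
    simpa [etaOfRho, hγ0, hWdef, hs₀def] using this
  -- lam ∘ eta ∘ line
  set D := fderiv ℝ lam η with hD
  have hη' : etaOfRho M (γ 0) = η := by rw [hγ0, aux_etaOfRho_rhoOf hη]
  have hlamline : HasDerivAt (fun t => lam (etaOfRho M (γ t))) (D W) 0 := by
    have := HasFDerivAt.comp_hasDerivAt (l := lam) (l' := D) 0
      (by rw [hη']; exact hld.hasFDerivAt) hE
    simpa [Function.comp_def] using this
  have hlam_i : ∀ i, HasDerivAt (fun t => lam (etaOfRho M (γ t)) i) (D W i) 0 :=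
    fun i => hasDerivAt_pi.mp hlamline i
  -- the full composite
  set A : ℝ := -∑ i, (Fin.cons (α := fun _ => ℝ) (0:ℝ) v i * lam η i
      + Fin.cons (α := fun _ => ℝ) (1:ℝ) ρ₀ i * D W i) with hAdef
  have hline : HasDerivAt (fun t => genFun M lam (γ t)) A 0 := by
    rw [show (fun t => genFun M lam (γ t)) = fun t =>
      -∑ i, Fin.cons (α := fun _ => ℝ) (1:ℝ) (γ t) i * lam (etaOfRho M (γ t)) i
      from rfl]
    apply HasDerivAt.neg
    apply HasDerivAt.fun_sum
    intro i _
    have := (hnum i).fun_mul (hlam_i i)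
    have hval0 : Fin.cons (α := fun _ => ℝ) (1:ℝ) (γ 0) i
        = Fin.cons (α := fun _ => ℝ) (1:ℝ) ρ₀ i := by rw [hγ0]
    have hval1 : lam (etaOfRho M (γ 0)) i = lam η i := by rw [hη']
    rw [hval0, hval1] at this
    convert this using 1 <;> try ring
  have hfd : HasDerivAt (fun t => genFun M lam (γ t))
      (fderiv ℝ (genFun M lam) ρ₀ v) 0 := by
    have := HasFDerivAt.comp_hasDerivAt (l := genFun M lam)
      (l' := fderiv ℝ (genFun M lam) ρ₀) 0
      (by rw [hγ0]; exact (aux_diff_genFun hη hld).hasFDerivAt) hγ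
    simpa [Function.comp_def] using this
  have hmain : fderiv ℝ (genFun M lam) ρ₀ v = A := hfd.unique hline
  rw [hmain, hAdef]
  -- now the algebra
  have hconsv : ∀ i : Fin (M+1),
      Fin.cons (α := fun _ => ℝ) (0:ℝ) v i = (Pi.single z.succ 1 : Fin (M+1) → ℝ) i := by
    intro i
    induction i using Fin.cases with
    | zero =>
      simp [Pi.single_apply, (Fin.succ_ne_zero z).symm]
    | succ y =>
      simp [hv, Pi.single_apply, Fin.succ_inj]
  have hW' : W = fun i => η 0 * ((Pi.single z.succ 1 : Fin (M+1) → ℝ) i - η i) := by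
    funext i
    rw [hWdef]
    simp only
    rw [hconsv i, aux_cons_rhoOf hη i, hs₀def, aux_one_add_sum_rhoOf hη]
    field_simp
  have hDW : D W = η 0 • (D (Pi.single z.succ 1) - D η) := by
    rw [hW']
    rw [show (fun i => η 0 * ((Pi.single z.succ 1 : Fin (M+1) → ℝ) i - η i))
        = η 0 • ((Pi.single z.succ 1 : Fin (M+1) → ℝ) - η) from rfl]
    rw [map_smul, map_sub]
  -- first sum : ∑ i, cons 0 v i * lam η i = lam η z.succ
  have hsum1 : ∑ i, Fin.cons (α := fun _ => ℝ) (0:ℝ) v i * lam η i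
      = lam η z.succ := by
    rw [Finset.sum_congr rfl fun i _ => by rw [hconsv i]]
    simp [Pi.single_apply, ite_mul]
  -- second sum
  have hsum2 : ∑ i, Fin.cons (α := fun _ => ℝ) (1:ℝ) ρ₀ i * D W i
      = gscore M lam η z.succ - ∑ j, η j * gscore M lam η j := by
    have hterm : ∀ i, Fin.cons (α := fun _ => ℝ) (1:ℝ) ρ₀ i * D W i
        = η i * D (Pi.single z.succ 1) i - η i * D η i := by
      intro i
      rw [aux_cons_rhoOf hη i, hDW]
      simp only [Pi.smul_apply, Pi.sub_apply, smul_eq_mul]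
      field_simp
    rw [Finset.sum_congr rfl fun i _ => hterm i, Finset.sum_sub_distrib]
    have hg : gscore M lam η z.succ = ∑ i, η i * D (Pi.single z.succ 1) i := by
      rw [aux_gscore_eq hld, riskCLM]
      simp [ContinuousLinearMap.sum_apply, hD]
    have hT : ∑ j, η j * gscore M lam η j = ∑ i, η i * D η i := by
      rw [aux_sum_gscore hld, riskCLM]
      simp [ContinuousLinearMap.sum_apply, hD]
    rw [hg, hT]
  rw [Finset.sum_add_distrib, hsum1, hsum2]
  ring

end Aux

/-- `λ^{Ψ^λ}(η) = λ(η) − ⟨η, g^λ(η)⟩·𝟙 + g^λ(η)` on `Δ°`; in particular, if `λ`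
is proper then `λ^{Ψ^λ} = λ` on `Δ°`. -/
theorem inducedRule_genFun_eq
    (M : ℕ) (hM : 1 ≤ M)
    (lam : (Fin (M + 1) → ℝ) → (Fin (M + 1) → ℝ))
    (U : Set (Fin (M + 1) → ℝ)) (hU : IsOpen U)
    (hΔU : posSimplex M ⊆ U)
    (h_diff : ∀ η ∈ U, DifferentiableAt ℝ lam η) :
    (∀ η ∈ posSimplex M, ∀ i,
        inducedRule M (genFun M lam) η i
          = lam η i - (∑ j, η j * gscore M lam η j) + gscore M lam η i)
    ∧ ((∀ ηs ∈ posSimplex M, ∀ ηh ∈ posSimplex M,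
          (∑ i, ηs i * lam ηs i) ≤ ∑ i, ηs i * lam ηh i) →
        ∀ η ∈ posSimplex M, inducedRule M (genFun M lam) η = lam η) := by
  classical
  have part1 : ∀ η ∈ posSimplex M, ∀ i,
      inducedRule M (genFun M lam) η i
        = lam η i - (∑ j, η j * gscore M lam η j) + gscore M lam η i := by
    intro η hη i
    have hld : DifferentiableAt ℝ lam η := h_diff η (hΔU hη)
    have h0 : η 0 ≠ 0 := ne_of_gt (hη.1 0)
    set T := ∑ j, η j * gscore M lam η j with hT
    induction i using Fin.cases with
    | succ y =>
      rw [show inducedRule M (genFun M lam) η y.succ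
          = - fderiv ℝ (genFun M lam) (rhoOf M η) (Pi.single y 1) from by
        rw [inducedRule, Fin.cons_succ]]
      rw [aux_fderiv_genFun hη hld y]
      ring
    | zero =>
      rw [show inducedRule M (genFun M lam) η 0
          = (∑ z, rhoOf M η z * fderiv ℝ (genFun M lam) (rhoOf M η) (Pi.single z 1))
            - genFun M lam (rhoOf M η) from by
        rw [inducedRule, Fin.cons_zero]]
      have hfd : ∀ z : Fin M, fderiv ℝ (genFun M lam) (rhoOf M η) (Pi.single z 1)
          = -(lam η z.succ) - gscore M lam η z.succ + T :=
        fun z => aux_fderiv_genFun hη hld z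
      have hΨ : genFun M lam (rhoOf M η) = -∑ i, (η i / η 0) * lam η i := by
        rw [genFun, aux_etaOfRho_rhoOf hη]
        exact congrArg Neg.neg (Finset.sum_congr rfl fun i _ => by
          rw [aux_cons_rhoOf hη i])
      rw [hΨ]
      rw [Finset.sum_congr rfl fun z _ => by rw [hfd z, rhoOf]]
      -- now pure algebra over sums
      have e1 : ∑ z : Fin M, η z.succ / η 0 *
          (-(lam η z.succ) - gscore M lam η z.succ + T)
          = (∑ z : Fin M, η z.succ * (-(lam η z.succ) - gscore M lam η z.succ + T)) / η 0 := by
        rw [Finset.sum_div]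
        exact Finset.sum_congr rfl fun z _ => by ring
      have e2 : ∑ i, (η i / η 0) * lam η i = (∑ i, η i * lam η i) / η 0 := by
        rw [Finset.sum_div]
        exact Finset.sum_congr rfl fun i _ => by ring
      rw [e1, e2]
      have hsum_eta : ∑ z : Fin M, η z.succ = 1 - η 0 := aux_sum_succ hη
      have expand : ∑ z : Fin M, η z.succ * (-(lam η z.succ) - gscore M lam η z.succ + T)
          = (1 - η 0) * T - ((∑ z : Fin M, η z.succ * lam η z.succ)
            + ∑ z : Fin M, η z.succ * gscore M lam η z.succ) := by
        rw [Finset.sum_congr rfl fun z _ =>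
          (by ring : η z.succ * (-(lam η z.succ) - gscore M lam η z.succ + T)
            = η z.succ * T - (η z.succ * lam η z.succ + η z.succ * gscore M lam η z.succ))]
        rw [Finset.sum_sub_distrib, Finset.sum_add_distrib, ← Finset.sum_mul, hsum_eta]
      have hsplit1 : ∑ i, η i * lam η i
          = η 0 * lam η 0 + ∑ z : Fin M, η z.succ * lam η z.succ := by
        rw [Fin.sum_univ_succ]
      have hsplit2 : T = η 0 * gscore M lam η 0
          + ∑ z : Fin M, η z.succ * gscore M lam η z.succ := by
        rw [hT, Fin.sum_univ_succ]
      rw [expand, hsplit1]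
      -- goal is now an identity in a few reals
      have : ∑ z : Fin M, η z.succ * gscore M lam η z.succ
          = T - η 0 * gscore M lam η 0 := by rw [hsplit2]; ring
      rw [this]
      field_simp
      ring
  refine ⟨part1, ?_⟩
  intro hproper η hη
  have hld : DifferentiableAt ℝ lam η := h_diff η (hΔU hη)
  -- properness forces the tangential gradient to vanish
  have hg_const : ∀ i, gscore M lam η i = gscore M lam η 0 := by
    intro i
    set u : Fin (M+1) → ℝ := Pi.single i 1 - Pi.single 0 1 with hu
    have hsum_u : ∑ j, u j = 0 := by
      simp [hu, Finset.sum_sub_distrib, Finset.sum_pi_single']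
    have habs_u : ∀ j, |u j| ≤ 1 := by
      intro j
      simp only [hu, Pi.sub_apply, Pi.single_apply]
      split_ifs <;> norm_num
    set δ : ℝ → (Fin (M+1) → ℝ) := fun t => η + t • u with hδdef
    have hδ0 : δ 0 = η := by simp [hδdef]
    have hδ : HasDerivAt δ u 0 := by
      have : HasDerivAt (fun t : ℝ => t • u) ((1:ℝ) • u) 0 :=
        (hasDerivAt_id 0).smul_const u
      simpa [hδdef] using this.const_add η
    have hcomp : HasDerivAt (fun t => ∑ j, η j * lam (δ t) j)
        (riskCLM M lam η u) 0 := by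
      have := HasFDerivAt.comp_hasDerivAt
        (l := fun η' => ∑ j, η j * lam η' j) (l' := riskCLM M lam η) 0
        (by rw [hδ0]; exact aux_hasFDerivAt_risk hld) hδ
      simpa [Function.comp_def] using this
    have hmin : IsLocalMin (fun t => ∑ j, η j * lam (δ t) j) 0 := by
      have hev : ∀ᶠ t : ℝ in nhds 0, δ t ∈ posSimplex M := by
        have : ∀ᶠ t : ℝ in nhds 0, ∀ j, |t| < η j := by
          rw [Filter.eventually_all]
          intro j
          simpa using eventually_abs_sub_lt (0:ℝ) (hη.1 j)
        filter_upwards [this] with t ht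
        constructor
        · intro j
          have h1 : |t * u j| ≤ |t| := by
            rw [abs_mul]
            calc |t| * |u j| ≤ |t| * 1 := by
                  exact mul_le_mul_of_nonneg_left (habs_u j) (abs_nonneg t)
              _ = |t| := mul_one _
          have h2 : -(η j) < t * u j := by
            have := neg_abs_le (t * u j)
            have := ht j
            nlinarith [abs_nonneg (t * u j)]
          simp only [hδdef, Pi.add_apply, Pi.smul_apply, smul_eq_mul]
          linarith
        · have : ∑ j, (η j + t * u j) = (∑ j, η j) + t * ∑ j, u j := by
            rw [Finset.sum_add_distrib, Finset.mul_sum]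
          simp only [hδdef, Pi.add_apply, Pi.smul_apply, smul_eq_mul]
          rw [this, hη.2, hsum_u]
          ring
      filter_upwards [hev] with t ht
      have := hproper η hη (δ t) ht
      simpa [hδ0] using this
    have hz : riskCLM M lam η u = 0 := hmin.hasDerivAt_eq_zero hcomp
    have : riskCLM M lam η (Pi.single i 1) = riskCLM M lam η (Pi.single 0 1) := by
      have := map_sub (riskCLM M lam η) (Pi.single i 1) (Pi.single 0 1)
      rw [← hu] at this
      rw [hz] at this
      linarith [this.symm]
    rw [aux_gscore_eq hld i, aux_gscore_eq hld 0, this]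
  have hTg : ∑ j, η j * gscore M lam η j = gscore M lam η 0 := by
    rw [Finset.sum_congr rfl fun j _ => by rw [hg_const j]]
    rw [← Finset.sum_mul, hη.2, one_mul]
  funext i
  rw [part1 η hη i, hTg, hg_const i]
  ring
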